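/- There is no lattice embedding of Λ(9) ⊕ Λ(2,2,2,3) into Z^5 such that every standard basis vector of Z^5 has nonzero pairing with both the image of Λ(9) and the image of Λ(2,2,2,3). -/
import Mathlib


/-- Standard dot product on `ℤ^5`. -/
def dotZ5 (x y : Fin 5 → ℤ) : ℤ := ∑ i, x i * y i

/-- Gram matrix of `Λ(9) ⊕ Λ(2,2,2,3)`: generator `v1` of square 9, orthogonal to the
linear lattice `Λ(2,2,2,3)` with generators `v2,...,v5`. -/
def gram9_2223 : Matrix (Fin 5) (Fin 5) ℤ :=
  !![9, 0, 0, 0, 0;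
     0, 2, -1, 0, 0;
     0, -1, 2, -1, 0;
     0, 0, -1, 2, -1;
     0, 0, 0, -1, 3]

lemma sq_cases (a : ℤ) (h0 : a ≠ 0) (h5 : a * a ≤ 5) : a * a = 1 ∨ a * a = 4 := by
  have h1 : -2 ≤ a ∧ a ≤ 2 := by constructor <;> nlinarith
  obtain ⟨hl, hr⟩ := h1
  interval_cases a <;> omega

theorem B31_no_embedding :
    ¬ ∃ f : Fin 5 → Fin 5 → ℤ,
      (∀ j l, dotZ5 (f j) (f l) = gram9_2223 j l) ∧
      (∀ k : Fin 5, f 0 k ≠ 0 ∧ ∃ j : Fin 5, j ≠ 0 ∧ f j k ≠ 0) := by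
  rintro ⟨f, hgram, hk⟩
  have h9 := hgram 0 0
  simp [dotZ5, gram9_2223, Fin.sum_univ_five] at h9
  have hne : ∀ k : Fin 5, f 0 k ≠ 0 := fun k => (hk k).1
  have hpos : ∀ k : Fin 5, 1 ≤ f 0 k * f 0 k := fun k => mul_self_pos.mpr (hne k)
  have h0 := hpos 0; have h1 := hpos 1; have h2 := hpos 2
  have h3 := hpos 3; have h4 := hpos 4
  have c0 := sq_cases (f 0 0) (hne 0) (by omega)
  have c1 := sq_cases (f 0 1) (hne 1) (by omega)
  have c2 := sq_cases (f 0 2) (hne 2) (by omega)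
  have c3 := sq_cases (f 0 3) (hne 3) (by omega)
  have c4 := sq_cases (f 0 4) (hne 4) (by omega)
  omega
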